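/- If the bigraded components satisfy φ ∈ C_{ab} and ψ ∈ C_{a'b'}, then φ ⌣ ψ ∈ C_{a+a', b+b'} and [φ, ψ] ⊆ Σ_{a+a' ≤ d ≤ b+b'} C_{a+a', d}; in particular both products land in S_{(a,b)+(a',b')}. -/

import Mathlib

open Finset

namespace Gerst

/-- A `p`-cochain of the algebra `A`: a map `A^p → A`. -/
abbrev Cochain (A : Type*) (p : ℕ) := (Fin p → A) → A

variable {A : Type*} [CommRing A]

/-- The cup product of cochains. -/
def cup {p q : ℕ} (φ : Cochain A p) (ψ : Cochain A q) : Cochain A (p + q) :=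
  fun u => φ (fun i => u (Fin.castAdd q i)) * ψ (fun i => u (Fin.natAdd p i))

/-- Insert the value of `ψ` at position `k` among the arguments of a `p`-cochain. -/
def insertArg {p q : ℕ} (ψ : Cochain A q) (k : Fin p) (u : Fin (p + q - 1) → A) :
    Fin p → A :=
  fun i =>
    if _h : i.val < k.val then u ⟨i.val, by have := i.isLt; have := k.isLt; omega⟩
    else if _h2 : i.val = k.val then
      ψ (fun j => u ⟨k.val + j.val, by have := j.isLt; have := k.isLt; omega⟩)
    else u ⟨i.val + q - 1, by have := i.isLt; have := k.isLt; omega⟩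

/-- `(-1)^m` for an integer exponent `m`. -/
def sgn (m : ℤ) : ℤ := ((-1 : ℤˣ) ^ m : ℤˣ)

/-- The Gerstenhaber circle (composition) product. -/
def circ {p q : ℕ} (φ : Cochain A p) (ψ : Cochain A q) : Cochain A (p + q - 1) :=
  fun u => ∑ k : Fin p, sgn ((k.val : ℤ) * ((q : ℤ) - 1)) • φ (insertArg ψ k u)

/-- The Gerstenhaber bracket. -/
def bracket {p q : ℕ} (φ : Cochain A p) (ψ : Cochain A q) : Cochain A (p + q - 1) :=
  fun u => circ φ ψ u -
    sgn (((p : ℤ) - 1) * ((q : ℤ) - 1)) •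
      circ ψ φ (fun i => u (Fin.cast (by omega) i))

/-- The multiplication of `A` as a 2-cochain. -/
def mulC : Cochain A 2 := fun u => u 0 * u 1

/-- The Hochschild coboundary operator. -/
def hdelta {p : ℕ} (φ : Cochain A p) : Cochain A (p + 1) :=
  fun u => u 0 * φ (fun i => u i.succ)
    + ∑ k : Fin p, ((-1 : ℤ) ^ (k.val + 1)) •
        φ (fun i =>
          if i.val < k.val then u ⟨i.val, by have := i.isLt; omega⟩
          else if i.val = k.val then
            u ⟨k.val, by have := k.isLt; omega⟩ * u ⟨k.val + 1, by have := k.isLt; omega⟩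
          else u ⟨i.val + 1, by have := i.isLt; omega⟩)
    + ((-1 : ℤ) ^ (p + 1)) • (φ (fun i => u i.castSucc) * u (Fin.last p))

/-- The iterated partial derivative `∂^a` on `ℝ[x₁,…,xₙ]`. -/
noncomputable def Dpow {n : ℕ} (a : Fin n → ℕ) :
    Module.End ℝ (MvPolynomial (Fin n) ℝ) :=
  ((List.finRange n).map
    (fun i => ((MvPolynomial.pderiv i).toLinearMap) ^ (a i))).prod

/-- The elementary cochain `x^{a₀} ∂^{a₁} ⊗ ⋯ ⊗ ∂^{a_p}`. -/
noncomputable def elem {n p : ℕ} (a₀ : Fin n → ℕ) (as : Fin p → Fin n → ℕ) :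
    Cochain (MvPolynomial (Fin n) ℝ) p :=
  fun u => MvPolynomial.monomial (Finsupp.equivFunOnFinite.symm a₀) (1 : ℝ) *
    ∏ s : Fin p, Dpow (as s) (u s)

/-- The weight `a₀ - ∑ₛ aₛ ∈ ℤⁿ` of an elementary cochain. -/
def wt {n p : ℕ} (a₀ : Fin n → ℕ) (as : Fin p → Fin n → ℕ) : Fin n → ℤ :=
  fun i => (a₀ i : ℤ) - ∑ s : Fin p, (as s i : ℤ)

/-- The total degree `a₀ + ∑ₛ aₛ` of an elementary cochain. -/
def swt {n p : ℕ} (a₀ : Fin n → ℕ) (as : Fin p → Fin n → ℕ) : Fin n → ℤ :=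
  fun i => (a₀ i : ℤ) + ∑ s : Fin p, (as s i : ℤ)

/-- The weight space `C_a`. -/
noncomputable def WS (n p : ℕ) (a : Fin n → ℤ) :
    Submodule ℝ (Cochain (MvPolynomial (Fin n) ℝ) p) :=
  Submodule.span ℝ {φ | ∃ a₀ as, wt a₀ as = a ∧ φ = elem a₀ as}

/-- `C_Δ = ⊕_{a ∈ Δ} C_a`. -/
noncomputable def CD (n p : ℕ) (Δ : Set (Fin n → ℤ)) :
    Submodule ℝ (Cochain (MvPolynomial (Fin n) ℝ) p) :=
  Submodule.span ℝ {φ | ∃ a₀ as, wt a₀ as ∈ Δ ∧ φ = elem a₀ as}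

/-- The Euler vector field `hⁱ = xᵢ ∂ᵢ` as a 1-cochain. -/
noncomputable def hV {n : ℕ} (i : Fin n) : Cochain (MvPolynomial (Fin n) ℝ) 1 :=
  fun u => MvPolynomial.X i * MvPolynomial.pderiv i (u 0)


/-- Lexicographic (non-strict) order on `ℤⁿ`. -/
def lexLe {n : ℕ} (a b : Fin n → ℤ) : Prop :=
  a = b ∨ ∃ i, (∀ j, j < i → a j = b j) ∧ a i < b i

/-- Lexicographic order on pairs. -/
def pairLe {n : ℕ} (α β : (Fin n → ℤ) × (Fin n → ℤ)) : Prop :=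
  (lexLe α.1 β.1 ∧ α.1 ≠ β.1) ∨ (α.1 = β.1 ∧ lexLe α.2 β.2)

/-- The bigraded component `C_{ab}`. -/
noncomputable def WS2 (n p : ℕ) (a b : Fin n → ℤ) :
    Submodule ℝ (Cochain (MvPolynomial (Fin n) ℝ) p) :=
  Submodule.span ℝ {φ | ∃ a₀ as, wt a₀ as = a ∧ swt a₀ as = b ∧ φ = elem a₀ as}

/-- The filtration space `S_{(a,b)} = ⊕_{a ≤ d ≤ b} C_{ad}`. -/
noncomputable def Sfil (n p : ℕ) (α : (Fin n → ℤ) × (Fin n → ℤ)) :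
    Submodule ℝ (Cochain (MvPolynomial (Fin n) ℝ) p) :=
  Submodule.span ℝ {φ | ∃ a₀ as, wt a₀ as = α.1 ∧
    lexLe α.1 (swt a₀ as) ∧ lexLe (swt a₀ as) α.2 ∧ φ = elem a₀ as}


open MvPolynomial

lemma lexLe_of_le {n : ℕ} {a b : Fin n → ℤ} (h : ∀ i, a i ≤ b i) : lexLe a b := by
  classical
  by_cases hab : a = b
  · exact Or.inl hab
  · right
    have hne : ∃ i, a i ≠ b i := by
      by_contra hc; push_neg at hc; exact hab (funext hc)
    set S : Finset (Fin n) := Finset.univ.filter (fun i => a i ≠ b i) with hSdef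
    have hS : S.Nonempty := by
      obtain ⟨i, hi⟩ := hne; exact ⟨i, by simp [hSdef, hi]⟩
    refine ⟨S.min' hS, ?_, ?_⟩
    · intro j hj
      by_contra hja
      have : S.min' hS ≤ j := S.min'_le j (by simp [hSdef, hja])
      exact absurd hj (not_lt.mpr this)
    · have hmem : S.min' hS ∈ S := S.min'_mem hS
      have : a (S.min' hS) ≠ b (S.min' hS) := by simpa [hSdef] using hmem
      exact lt_of_le_of_ne (h _) this

lemma commute_pderiv {n : ℕ} (i j : Fin n) :
    Commute ((pderiv i).toLinearMap : Module.End ℝ (MvPolynomial (Fin n) ℝ))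
      ((pderiv j).toLinearMap) := by
  rcases eq_or_ne i j with rfl | hij
  · exact Commute.refl _
  · apply LinearMap.ext
    intro f
    simp only [Module.End.mul_apply, Derivation.coeFn_coe]
    induction f using MvPolynomial.induction_on' with
    | add f g hf hg => simp only [map_add, hf, hg]
    | monomial s c =>
      simp only [pderiv_monomial]
      have hsub : ∀ (u : Fin n →₀ ℕ) (x y : Fin n), u - Finsupp.single x 1 - Finsupp.single y 1
          = u - Finsupp.single y 1 - Finsupp.single x 1 := by
        intro u x y; ext m; simp [Finsupp.single_apply]; omega
      have h1 : ((s - Finsupp.single j 1) : Fin n →₀ ℕ) i = s i := by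
        simp [Finsupp.sub_apply, Finsupp.single_apply, Ne.symm hij]
      have h2 : ((s - Finsupp.single i 1) : Fin n →₀ ℕ) j = s j := by
        simp [Finsupp.sub_apply, Finsupp.single_apply, hij]
      rw [h1, h2, hsub]
      ring_nf

lemma list_prod_pull {n : ℕ} (i : Fin n) (f : Fin n → Module.End ℝ (MvPolynomial (Fin n) ℝ))
    (hc : ∀ j, Commute ((pderiv i).toLinearMap) (f j)) :
    ∀ l : List (Fin n), l.Nodup → i ∈ l →
    (l.map (Function.update f i ((pderiv i).toLinearMap * f i))).prod
      = (pderiv i).toLinearMap * (l.map f).prod := by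
  intro l
  induction l with
  | nil => simp
  | cons j t ih =>
    intro hnd hmem
    rcases eq_or_ne j i with rfl | hji
    · have hit : j ∉ t := (List.nodup_cons.mp hnd).1
      have ht : t.map (Function.update f j ((pderiv j).toLinearMap * f j)) = t.map f := by
        apply List.map_congr_left
        intro x hx
        exact Function.update_of_ne (by rintro rfl; exact hit hx) _ _
      simp [ht, Function.update_self, mul_assoc]
    · have hit : i ∈ t := by
        rcases List.mem_cons.mp hmem with h | h
        · exact absurd h.symm hji
        · exact h
      have hnd' : t.Nodup := (List.nodup_cons.mp hnd).2
      simp only [List.map_cons, List.prod_cons, ih hnd' hit]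
      rw [Function.update_of_ne hji]
      rw [← mul_assoc, ← (hc j).eq, mul_assoc]

lemma Dpow_one' {n : ℕ} (a : Fin n → ℕ) (h : ∀ i, a i = 0) : Dpow a = 1 := by
  unfold Dpow
  apply List.prod_eq_one
  intro x hx
  simp only [List.mem_map] at hx
  obtain ⟨i, -, rfl⟩ := hx
  simp [h i]

lemma Dpow_succ {n : ℕ} (a : Fin n → ℕ) (i : Fin n) :
    Dpow (Function.update a i (a i + 1)) = (pderiv i).toLinearMap * Dpow a := by
  unfold Dpow
  have hfun : (fun j => ((pderiv j).toLinearMap : Module.End ℝ (MvPolynomial (Fin n) ℝ))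
        ^ (Function.update a i (a i + 1) j))
      = Function.update (fun j => ((pderiv j).toLinearMap : Module.End ℝ (MvPolynomial (Fin n) ℝ)) ^ (a j)) i
          ((pderiv i).toLinearMap * (pderiv i).toLinearMap ^ (a i)) := by
    funext j
    rcases eq_or_ne j i with rfl | h
    · simp [pow_succ']
    · simp [Function.update_of_ne h]
  rw [hfun]
  exact list_prod_pull i _ (fun j => ((commute_pderiv i j)).pow_right _)
    (List.finRange n) (List.nodup_finRange n) (List.mem_finRange i)

lemma pderiv_finprod {n : ℕ} {ι : Type*} [DecidableEq ι] (i : Fin n) (s : Finset ι)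
    (f : ι → MvPolynomial (Fin n) ℝ) :
    pderiv i (∏ t ∈ s, f t) = ∑ t ∈ s, pderiv i (f t) * ∏ r ∈ s.erase t, f r := by
  induction s using Finset.induction_on with
  | empty => simp
  | @insert x s hx ih =>
    rw [Finset.prod_insert hx, pderiv_mul, ih, Finset.sum_insert hx, Finset.erase_insert hx,
      Finset.mul_sum]
    congr 1
    apply Finset.sum_congr rfl
    intro t ht
    have htx : t ≠ x := by rintro rfl; exact hx ht
    rw [Finset.erase_insert_of_ne (Ne.symm htx), Finset.prod_insert (fun h => hx (Finset.mem_of_mem_erase h))]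
    ring

/-- Auxiliary span: weight exactly `w`, total degree at most `s` componentwise. -/
noncomputable def DSpan (n p : ℕ) (w s : Fin n → ℤ) :
    Submodule ℝ (Cochain (MvPolynomial (Fin n) ℝ) p) :=
  Submodule.span ℝ {φ | ∃ b₀ bs, wt b₀ bs = w ∧ (∀ i, swt b₀ bs i ≤ s i) ∧ φ = elem b₀ bs}

lemma pderiv_elem {n q : ℕ} (i : Fin n) (b₀ : Fin n → ℕ) (bs : Fin q → Fin n → ℕ) :
    (fun u => pderiv i (elem b₀ bs u) : Cochain (MvPolynomial (Fin n) ℝ) q)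
      = (b₀ i : ℝ) • elem (Function.update b₀ i (b₀ i - 1)) bs
        + ∑ t : Fin q, elem b₀ (Function.update bs t (Function.update (bs t) i (bs t i + 1))) := by
  classical
  funext u
  have hmon : (pderiv i) ((monomial (Finsupp.equivFunOnFinite.symm b₀)) (1:ℝ))
      = (b₀ i : ℝ) • (monomial (Finsupp.equivFunOnFinite.symm (Function.update b₀ i (b₀ i - 1)))) (1:ℝ) := by
    rw [pderiv_monomial]
    have h2 : (Finsupp.equivFunOnFinite.symm b₀ : Fin n →₀ ℕ) - Finsupp.single i 1
        = Finsupp.equivFunOnFinite.symm (Function.update b₀ i (b₀ i - 1)) := by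
      ext j
      simp only [Finsupp.sub_apply, Finsupp.single_apply, Finsupp.coe_equivFunOnFinite_symm,
        Function.update_apply]
      rcases eq_or_ne j i with rfl | h
      · simp
      · simp [h, Ne.symm h]
    rw [h2, MvPolynomial.smul_monomial]
    simp
  have hprod : (pderiv i) (∏ s : Fin q, Dpow (bs s) (u s))
      = ∑ t : Fin q, Dpow (Function.update (bs t) i (bs t i + 1)) (u t)
          * ∏ r ∈ Finset.univ.erase t, Dpow (bs r) (u r) := by
    rw [pderiv_finprod]
    apply Finset.sum_congr rfl
    intro t _
    congr 1
    simp [Dpow_succ, Module.End.mul_apply]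
  have helem : ∀ t : Fin q, elem b₀ (Function.update bs t (Function.update (bs t) i (bs t i + 1))) u
      = (monomial (Finsupp.equivFunOnFinite.symm b₀)) (1:ℝ) *
        (Dpow (Function.update (bs t) i (bs t i + 1)) (u t)
          * ∏ r ∈ Finset.univ.erase t, Dpow (bs r) (u r)) := by
    intro t
    show (monomial (Finsupp.equivFunOnFinite.symm b₀)) (1:ℝ) * _ = _
    congr 1
    rw [← Finset.mul_prod_erase _ _ (Finset.mem_univ t), Function.update_self]
    congr 1
    apply Finset.prod_congr rfl
    intro r hr
    rw [Function.update_of_ne (Finset.ne_of_mem_erase hr)]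
  show pderiv i (elem b₀ bs u) = _
  simp only [Pi.add_apply, Pi.smul_apply, Finset.sum_apply]
  show pderiv i ((monomial (Finsupp.equivFunOnFinite.symm b₀)) (1:ℝ) * ∏ s : Fin q, Dpow (bs s) (u s)) = _
  rw [pderiv_mul, hmon, hprod, Finset.mul_sum]
  have e1 : ((b₀ i : ℝ) • (monomial (Finsupp.equivFunOnFinite.symm (Function.update b₀ i (b₀ i - 1)))) (1:ℝ)) * ∏ s : Fin q, Dpow (bs s) (u s)
      = (b₀ i : ℝ) • elem (Function.update b₀ i (b₀ i - 1)) bs u := by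
    rw [smul_mul_assoc]; rfl
  have e2 : ∀ t ∈ (Finset.univ : Finset (Fin q)),
      (monomial (Finsupp.equivFunOnFinite.symm b₀)) (1:ℝ) *
        (Dpow (Function.update (bs t) i (bs t i + 1)) (u t)
          * ∏ r ∈ Finset.univ.erase t, Dpow (bs r) (u r))
      = elem b₀ (Function.update bs t (Function.update (bs t) i (bs t i + 1))) u := by
    intro t _
    rw [helem t]
  rw [e1, Finset.sum_congr rfl e2]

lemma sum_update_apply {q n : ℕ} (bs : Fin q → Fin n → ℕ) (t : Fin q) (c : Fin n → ℕ) (j : Fin n) :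
    (∑ s, Function.update bs t c s j) + bs t j = (∑ s, bs s j) + c j := by
  classical
  have h : ∀ s, Function.update bs t c s j = Function.update (fun s => bs s j) t (c j) s := by
    intro s; rcases eq_or_ne s t with rfl | h
    · simp
    · simp [Function.update_of_ne h]
  rw [Finset.sum_congr rfl (fun s _ => h s), Finset.sum_update_of_mem (Finset.mem_univ t),
    ← Finset.add_sum_erase _ (fun s => bs s j) (Finset.mem_univ t)]
  simp only [Finset.erase_eq]
  ring

lemma sum_update_cast {q n : ℕ} (bs : Fin q → Fin n → ℕ) (t : Fin q) (i j : Fin n) :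
    (∑ s, ((Function.update bs t (Function.update (bs t) i (bs t i + 1)) s) j : ℤ))
      = (∑ s, (bs s j : ℤ)) + (if j = i then 1 else 0) := by
  classical
  have hc : Function.update (bs t) i (bs t i + 1) j = bs t j + (if j = i then 1 else 0) := by
    rcases eq_or_ne j i with rfl | hj
    · simp
    · simp [Function.update_of_ne hj, hj]
  have hsum := sum_update_apply bs t (Function.update (bs t) i (bs t i + 1)) j
  rw [hc] at hsum
  have h2 := congrArg (Nat.cast : ℕ → ℤ) hsum
  rcases eq_or_ne j i with rfl | hj
  · simp only [if_pos rfl] at h2 ⊢; push_cast at h2; linarith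
  · simp only [if_neg hj] at h2 ⊢; push_cast at h2; linarith

lemma DSpan_pderiv_mem {n q : ℕ} (i : Fin n) {w s : Fin n → ℤ}
    {χ : Cochain (MvPolynomial (Fin n) ℝ) q} (h : χ ∈ DSpan n q w s) :
    (fun u => pderiv i (χ u)) ∈ DSpan n q
      (fun j => w j - if j = i then 1 else 0) (fun j => s j + if j = i then 1 else 0) := by
  classical
  induction h using Submodule.span_induction with
  | mem φ hφ =>
    obtain ⟨b₀, bs, hw, hs, rfl⟩ := hφ
    rw [pderiv_elem]
    apply add_mem
    · by_cases hb : b₀ i = 0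
      · have : ((b₀ i : ℝ)) = 0 := by rw [hb]; norm_num
        rw [this, zero_smul]
        exact zero_mem _
      · apply Submodule.smul_mem
        apply Submodule.subset_span
        refine ⟨_, _, ?_, ?_, rfl⟩
        · funext j
          have hw' := congrFun hw j
          simp only [wt] at hw' ⊢
          rcases eq_or_ne j i with rfl | hj
          · rw [Function.update_self, if_pos rfl]
            have h2 : ((b₀ j - 1 : ℕ) : ℤ) = (b₀ j : ℤ) - 1 := by
              have h3 : 1 ≤ b₀ j := Nat.one_le_iff_ne_zero.mpr hb
              omega
            rw [h2]; linarith
          · rw [Function.update_of_ne hj, if_neg hj]; linarith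
        · intro j
          have hs' := hs j
          simp only [swt] at hs' ⊢
          rcases eq_or_ne j i with rfl | hj
          · rw [Function.update_self, if_pos rfl]
            have h1 : ((b₀ j - 1 : ℕ) : ℤ) ≤ (b₀ j : ℤ) := by
              have := Nat.sub_le (b₀ j) 1; exact_mod_cast this
            linarith
          · rw [Function.update_of_ne hj, if_neg hj]; linarith
    · apply Submodule.sum_mem
      intro t _
      apply Submodule.subset_span
      refine ⟨_, _, ?_, ?_, rfl⟩
      · funext j
        have hw' := congrFun hw j
        simp only [wt] at hw' ⊢
        rw [sum_update_cast]
        split <;> linarith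
      · intro j
        have hs' := hs j
        simp only [swt] at hs' ⊢
        rw [sum_update_cast]
        split <;> linarith
  | zero =>
    have h0 : (fun u => pderiv i ((0 : Cochain (MvPolynomial (Fin n) ℝ) q) u)) = 0 := by
      funext u; simp
    rw [h0]; exact zero_mem _
  | add x y hx hy ihx ihy =>
    have h0 : (fun u => pderiv i ((x + y) u))
        = (fun u => pderiv i (x u)) + fun u => pderiv i (y u) := by
      funext u; simp [Pi.add_apply]
    rw [h0]; exact add_mem ihx ihy
  | smul c x hx ihx =>
    have h0 : (fun u => pderiv i ((c • x) u)) = c • fun u => pderiv i (x u) := by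
      funext u; simp [Pi.smul_apply]
    rw [h0]; exact Submodule.smul_mem _ _ ihx

lemma DSpan_congr {n q : ℕ} {w w' s s' : Fin n → ℤ} (hw : w = w') (hs : s = s') :
    DSpan n q w s = DSpan n q w' s' := by rw [hw, hs]

lemma DSpan_Dpow_mem {n q : ℕ} (N : ℕ) (a : Fin n → ℕ) (hN : ∑ i, a i = N)
    {w s : Fin n → ℤ} {χ : Cochain (MvPolynomial (Fin n) ℝ) q} (h : χ ∈ DSpan n q w s) :
    (fun u => Dpow a (χ u)) ∈ DSpan n q (fun j => w j - a j) (fun j => s j + a j) := by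
  classical
  induction N generalizing a w s χ with
  | zero =>
    have ha : ∀ i, a i = 0 := by
      intro i
      by_contra hi
      have : 0 < ∑ i, a i := Finset.sum_pos' (fun _ _ => Nat.zero_le _)
        ⟨i, Finset.mem_univ i, Nat.pos_of_ne_zero hi⟩
      omega
    have h1 : (fun u => Dpow a (χ u)) = χ := by
      funext u; rw [Dpow_one' a ha]; rfl
    rw [h1, DSpan_congr (w' := w) (s' := s)]
    · exact h
    · funext j; rw [ha j]; push_cast; ring
    · funext j; rw [ha j]; push_cast; ring
  | succ N ih =>
    have hex : ∃ i, a i ≠ 0 := by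
      by_contra hc; push_neg at hc
      rw [Finset.sum_congr rfl (fun i _ => hc i)] at hN
      simp at hN
    obtain ⟨i, hi⟩ := hex
    set a' := Function.update a i (a i - 1) with ha'
    have haa : a = Function.update a' i (a' i + 1) := by
      funext j
      rcases eq_or_ne j i with rfl | hj
      · simp [ha']; omega
      · simp [ha', Function.update_of_ne hj]
    have hN' : ∑ j, a' j = N := by
      have := sum_update_apply (fun (_ : Fin 1) => a) 0 a' i
      -- not useful; compute directly
      have h1 : ∑ j, a' j + 1 = ∑ j, a j := by
        rw [ha']
        rw [Finset.sum_update_of_mem (Finset.mem_univ i),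
          ← Finset.add_sum_erase _ a (Finset.mem_univ i)]
        simp only [Finset.erase_eq]
        omega
      omega
    have hstep := ih a' hN' h
    have hD : (fun u => Dpow a (χ u))
        = fun u => pderiv i (Dpow a' (χ u)) := by
      funext u
      rw [haa, Dpow_succ]
      rfl
    rw [hD]
    have := DSpan_pderiv_mem i hstep
    rw [DSpan_congr (w' := fun j => w j - a j) (s' := fun j => s j + a j)] at this
    · exact this
    · funext j
      rcases eq_or_ne j i with rfl | hj
      · simp only [if_pos rfl, ha', Function.update_self]
        have : 1 ≤ a j := Nat.one_le_iff_ne_zero.mpr hi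
        push_cast [this]
        ring
      · simp only [if_neg hj, ha', Function.update_of_ne hj]
        ring
    · funext j
      rcases eq_or_ne j i with rfl | hj
      · simp only [if_pos rfl, ha', Function.update_self]
        have : 1 ≤ a j := Nat.one_le_iff_ne_zero.mpr hi
        push_cast [this]
        ring
      · simp only [if_neg hj, ha', Function.update_of_ne hj]
        ring

lemma wt_le_swt {n p : ℕ} (b₀ : Fin n → ℕ) (bs : Fin p → Fin n → ℕ) (i : Fin n) :
    wt b₀ bs i ≤ swt b₀ bs i := by
  simp only [wt, swt]
  have : (0:ℤ) ≤ ∑ s, (bs s i : ℤ) :=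
    Finset.sum_nonneg (fun s _ => by positivity)
  linarith

lemma DSpan_le_Sfil (n p : ℕ) (w s : Fin n → ℤ) : DSpan n p w s ≤ Sfil n p (w, s) := by
  apply Submodule.span_mono
  rintro φ ⟨b₀, bs, h1, h2, h3⟩
  exact ⟨b₀, bs, h1, h1 ▸ lexLe_of_le (fun i => h1 ▸ wt_le_swt b₀ bs i),
    lexLe_of_le h2, h3⟩

lemma WS2_le_DSpan (n p : ℕ) (a b : Fin n → ℤ) : WS2 n p a b ≤ DSpan n p a b := by
  apply Submodule.span_mono
  rintro φ ⟨b₀, bs, h1, h2, h3⟩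
  exact ⟨b₀, bs, h1, fun i => le_of_eq (congrFun h2 i), h3⟩

lemma equivFun_symm_add {n : ℕ} (a b : Fin n → ℕ) :
    (Finsupp.equivFunOnFinite.symm (a + b) : Fin n →₀ ℕ)
      = Finsupp.equivFunOnFinite.symm a + Finsupp.equivFunOnFinite.symm b := by
  ext j; simp

lemma cup_elem {n p q : ℕ} (a₀ : Fin n → ℕ) (as : Fin p → Fin n → ℕ)
    (b₀ : Fin n → ℕ) (bs : Fin q → Fin n → ℕ) :
    cup (elem a₀ as) (elem b₀ bs) = elem (a₀ + b₀) (Fin.append as bs) := by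
  funext u
  show (elem a₀ as fun i => u (Fin.castAdd q i)) * (elem b₀ bs fun i => u (Fin.natAdd p i)) = _
  unfold elem
  rw [Fin.prod_univ_add (f := fun i => Dpow (Fin.append as bs i) (u i))]
  simp only [Fin.append_left, Fin.append_right]
  rw [equivFun_symm_add]
  have hm : (monomial (Finsupp.equivFunOnFinite.symm a₀)) (1:ℝ)
      * (monomial (Finsupp.equivFunOnFinite.symm b₀)) (1:ℝ)
      = (monomial (Finsupp.equivFunOnFinite.symm a₀ + Finsupp.equivFunOnFinite.symm b₀)) (1:ℝ) := by
    rw [MvPolynomial.monomial_mul, one_mul]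
  rw [← hm]
  ring

lemma wt_append {n p q : ℕ} (a₀ : Fin n → ℕ) (as : Fin p → Fin n → ℕ)
    (b₀ : Fin n → ℕ) (bs : Fin q → Fin n → ℕ) :
    wt (a₀ + b₀) (Fin.append as bs) = wt a₀ as + wt b₀ bs := by
  funext i
  simp only [wt, Pi.add_apply]
  rw [Fin.sum_univ_add (f := fun s => ((Fin.append as bs s) i : ℤ))]
  simp only [Fin.append_left, Fin.append_right]
  push_cast
  ring

lemma swt_append {n p q : ℕ} (a₀ : Fin n → ℕ) (as : Fin p → Fin n → ℕ)
    (b₀ : Fin n → ℕ) (bs : Fin q → Fin n → ℕ) :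
    swt (a₀ + b₀) (Fin.append as bs) = swt a₀ as + swt b₀ bs := by
  funext i
  simp only [swt, Pi.add_apply]
  rw [Fin.sum_univ_add (f := fun s => ((Fin.append as bs s) i : ℤ))]
  simp only [Fin.append_left, Fin.append_right]
  push_cast
  ring

lemma cup_mem {n p q : ℕ} {a b a' b' : Fin n → ℤ}
    {φ : Cochain (MvPolynomial (Fin n) ℝ) p} {ψ : Cochain (MvPolynomial (Fin n) ℝ) q}
    (hφ : φ ∈ WS2 n p a b) (hψ : ψ ∈ WS2 n q a' b') :
    cup φ ψ ∈ WS2 n (p + q) (a + a') (b + b') := by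
  induction hφ using Submodule.span_induction with
  | mem φ₁ hφ₁ =>
    obtain ⟨a₀, as, hw, hs, rfl⟩ := hφ₁
    induction hψ using Submodule.span_induction with
    | mem ψ₁ hψ₁ =>
      obtain ⟨b₀, bs, hw', hs', rfl⟩ := hψ₁
      apply Submodule.subset_span
      exact ⟨a₀ + b₀, Fin.append as bs, by rw [wt_append, hw, hw'],
        by rw [swt_append, hs, hs'], cup_elem a₀ as b₀ bs⟩
    | zero =>
      have : cup (elem a₀ as) (0 : Cochain (MvPolynomial (Fin n) ℝ) q) = 0 := by
        funext u; show _ * _ = _; simp [Pi.zero_apply]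
      rw [this]; exact zero_mem _
    | add x y hx hy ihx ihy =>
      have : cup (elem a₀ as) (x + y) = cup (elem a₀ as) x + cup (elem a₀ as) y := by
        funext u; show _ * _ = _; simp [cup, Pi.add_apply, mul_add]
      rw [this]; exact add_mem ihx ihy
    | smul c x hx ihx =>
      have : cup (elem a₀ as) (c • x) = c • cup (elem a₀ as) x := by
        funext u; show _ * _ = _; simp [cup, Pi.smul_apply, mul_smul_comm]
      rw [this]; exact Submodule.smul_mem _ _ ihx
  | zero =>
    have : cup (0 : Cochain (MvPolynomial (Fin n) ℝ) p) ψ = 0 := by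
      funext u; show _ * _ = _; simp [Pi.zero_apply]
    rw [this]; exact zero_mem _
  | add x y hx hy ihx ihy =>
    have : cup (x + y) ψ = cup x ψ + cup y ψ := by
      funext u; show _ * _ = _; simp [cup, Pi.add_apply, add_mul]
    rw [this]; exact add_mem ihx ihy
  | smul c x hx ihx =>
    have : cup (c • x) ψ = c • cup x ψ := by
      funext u; show _ * _ = _; simp [cup, Pi.smul_apply, smul_mul_assoc]
    rw [this]; exact Submodule.smul_mem _ _ ihx

/-- Index of the `j`-th argument of the inner cochain. -/
def shIdx {p q : ℕ} (k : Fin p) (j : Fin q) : Fin (p + q - 1) :=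
  ⟨k.val + j.val, by have := k.isLt; have := j.isLt; omega⟩

/-- Index of the `s`-th outer argument (`s ≠ k`). -/
def reIdx {p : ℕ} (q : ℕ) (k s : Fin p) (h : s ≠ k) : Fin (p + q - 1) :=
  if hlt : s.val < k.val then ⟨s.val, by have := k.isLt; omega⟩
  else ⟨s.val + q - 1, by
    have h1 : k.val < s.val :=
      lt_of_le_of_ne (not_lt.mp hlt) (fun e => h (Fin.ext e.symm))
    have := s.isLt; omega⟩

/-- The merged family of derivative multi-indices. -/
def mergeIdx {n p q : ℕ} (as : Fin p → Fin n → ℕ) (bs : Fin q → Fin n → ℕ) (k : Fin p)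
    (w : Fin (p + q - 1)) : Fin n → ℕ :=
  if h1 : w.val < k.val then as ⟨w.val, by have := k.isLt; omega⟩
  else if h2 : w.val < k.val + q then bs ⟨w.val - k.val, by omega⟩
  else as ⟨w.val - q + 1, by have := w.isLt; have := k.isLt; omega⟩

lemma merge_sh {n p q : ℕ} (as : Fin p → Fin n → ℕ) (bs : Fin q → Fin n → ℕ) (k : Fin p)
    (j : Fin q) : mergeIdx as bs k (shIdx k j) = bs j := by
  have hj := j.isLt
  dsimp only [mergeIdx, shIdx]
  rw [dif_neg (show ¬(k.val + j.val < k.val) by omega),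
    dif_pos (show k.val + j.val < k.val + q by omega)]
  exact congrArg bs (Fin.ext (show k.val + j.val - k.val = j.val by omega))

lemma merge_re {n p q : ℕ} (as : Fin p → Fin n → ℕ) (bs : Fin q → Fin n → ℕ) (k : Fin p)
    (s : Fin p) (h : s ≠ k) : mergeIdx as bs k (reIdx q k s h) = as s := by
  dsimp only [mergeIdx, reIdx]
  by_cases hlt : s.val < k.val
  · rw [dif_pos hlt]
    dsimp only
    rw [dif_pos (show s.val < k.val from hlt)]
  · have h1 : k.val < s.val :=
      lt_of_le_of_ne (not_lt.mp hlt) (fun e => h (Fin.ext e.symm))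
    have hs := s.isLt
    rw [dif_neg hlt]
    dsimp only
    rw [dif_neg (show ¬(s.val + q - 1 < k.val) by omega),
      dif_neg (show ¬(s.val + q - 1 < k.val + q) by omega)]
    exact congrArg as (Fin.ext (show s.val + q - 1 - q + 1 = s.val by omega))

lemma shIdx_val {p q : ℕ} (k : Fin p) (j : Fin q) : (shIdx k j).val = k.val + j.val := rfl

lemma reIdx_val {p : ℕ} (q : ℕ) (k s : Fin p) (h : s ≠ k) :
    ((reIdx q k s h).val = s.val ∧ s.val < k.val) ∨
      ((reIdx q k s h).val = s.val + q - 1 ∧ k.val < s.val) := by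
  unfold reIdx
  by_cases hlt : s.val < k.val
  · rw [dif_pos hlt]; exact Or.inl ⟨rfl, hlt⟩
  · have h1 : k.val < s.val :=
      lt_of_le_of_ne (not_lt.mp hlt) (fun e => h (Fin.ext e.symm))
    rw [dif_neg hlt]; exact Or.inr ⟨rfl, h1⟩

@[to_additive]
lemma prod_split {M : Type*} [CommMonoid M] {p q : ℕ} (k : Fin p)
    (g : Fin (p + q - 1) → M) :
    ∏ w, g w = (∏ j : Fin q, g (shIdx k j)) *
      ∏ s : {s : Fin p // s ∈ Finset.univ.erase k},
        g (reIdx q k s.1 (Finset.ne_of_mem_erase s.2)) := by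
  classical
  have hk := k.isLt
  set e : (Fin q ⊕ {s : Fin p // s ∈ Finset.univ.erase k}) → Fin (p + q - 1) :=
    Sum.elim (shIdx k) (fun s => reIdx q k s.1 (Finset.ne_of_mem_erase s.2)) with he
  have hinj : Function.Injective e := by
    rintro (x | x) (y | y) hxy <;>
      simp only [he, Sum.elim_inl, Sum.elim_inr] at hxy
    · have hv := congrArg Fin.val hxy
      simp only [shIdx_val] at hv
      exact congrArg Sum.inl (Fin.ext (by omega))
    · exfalso
      have hx := x.isLt
      have h2 := congrArg Fin.val hxy
      simp only [shIdx_val] at h2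
      rcases reIdx_val q k y.1 (Finset.ne_of_mem_erase y.2) with ⟨hv, hlt⟩ | ⟨hv, hgt⟩ <;>
        · have hy := y.1.isLt; omega
    · exfalso
      have hy := y.isLt
      have h2 := congrArg Fin.val hxy
      simp only [shIdx_val] at h2
      rcases reIdx_val q k x.1 (Finset.ne_of_mem_erase x.2) with ⟨hv, hlt⟩ | ⟨hv, hgt⟩ <;>
        · have hx := x.1.isLt; omega
    · have h2 := congrArg Fin.val hxy
      rcases reIdx_val q k x.1 (Finset.ne_of_mem_erase x.2) with ⟨hv1, h1⟩ | ⟨hv1, h1⟩ <;>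
        rcases reIdx_val q k y.1 (Finset.ne_of_mem_erase y.2) with ⟨hv2, h2'⟩ | ⟨hv2, h2'⟩ <;>
          exact congrArg Sum.inr (Subtype.ext (Fin.ext (by omega)))
  have hbij : Function.Bijective e :=
    (Fintype.bijective_iff_injective_and_card e).mpr ⟨hinj, by
      simp only [Fintype.card_sum, Fintype.card_coe, Fintype.card_fin,
        Finset.card_erase_of_mem (Finset.mem_univ k), Finset.card_univ, Fintype.card_fin]
      omega⟩
  have h1 : ∏ x, g (e x) = ∏ w, g w :=
    Fintype.prod_bijective e hbij _ g (fun _ => rfl)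
  rw [← h1, Fintype.prod_sum_type]
  rfl

/-- Plugging a cochain `χ` into slot `k` of the elementary frame `(a₀, as)`. -/
noncomputable def plug {n p q : ℕ} (a₀ : Fin n → ℕ) (as : Fin p → Fin n → ℕ) (k : Fin p)
    (χ : Cochain (MvPolynomial (Fin n) ℝ) q) : Cochain (MvPolynomial (Fin n) ℝ) (p + q - 1) :=
  fun u => χ (fun j => u (shIdx k j)) *
    ((MvPolynomial.monomial (Finsupp.equivFunOnFinite.symm a₀)) (1:ℝ) *
      ∏ s : {s : Fin p // s ∈ Finset.univ.erase k},
        Dpow (as s.1) (u (reIdx q k s.1 (Finset.ne_of_mem_erase s.2))))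

lemma insertArg_ne {n q : ℕ} {p : ℕ} (ψ : Cochain (MvPolynomial (Fin n) ℝ) q) (k : Fin p)
    (u : Fin (p + q - 1) → MvPolynomial (Fin n) ℝ) (s : Fin p) (h : s ≠ k) :
    insertArg ψ k u s = u (reIdx q k s h) := by
  dsimp only [insertArg, reIdx]
  by_cases hlt : s.val < k.val
  · rw [dif_pos hlt, dif_pos hlt]
  · have h1 : k.val < s.val :=
      lt_of_le_of_ne (not_lt.mp hlt) (fun e => h (Fin.ext e.symm))
    rw [dif_neg hlt, dif_neg (show ¬s.val = k.val by omega), dif_neg hlt]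

lemma insertArg_eq {n q : ℕ} {p : ℕ} (ψ : Cochain (MvPolynomial (Fin n) ℝ) q) (k : Fin p)
    (u : Fin (p + q - 1) → MvPolynomial (Fin n) ℝ) :
    insertArg ψ k u k = ψ (fun j => u (shIdx k j)) := by
  dsimp only [insertArg, shIdx]
  rw [dif_neg (lt_irrefl _), dif_pos rfl]

lemma plug_insert {n p q : ℕ} (a₀ : Fin n → ℕ) (as : Fin p → Fin n → ℕ) (k : Fin p)
    (ψ : Cochain (MvPolynomial (Fin n) ℝ) q) :
    (fun u => elem a₀ as (insertArg ψ k u))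
      = plug a₀ as k (fun v => Dpow (as k) (ψ v)) := by
  funext u
  show (MvPolynomial.monomial (Finsupp.equivFunOnFinite.symm a₀)) (1:ℝ)
      * ∏ s : Fin p, Dpow (as s) (insertArg ψ k u s) = _
  rw [← Finset.mul_prod_erase _ _ (Finset.mem_univ k), insertArg_eq]
  have h2 : ∏ s ∈ Finset.univ.erase k, Dpow (as s) (insertArg ψ k u s)
      = ∏ s : {s : Fin p // s ∈ Finset.univ.erase k},
          Dpow (as s.1) (u (reIdx q k s.1 (Finset.ne_of_mem_erase s.2))) := by
    rw [← Finset.prod_attach (Finset.univ.erase k)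
      (fun s => Dpow (as s) (insertArg ψ k u s))]
    rw [Finset.univ_eq_attach]
    apply Finset.prod_congr rfl
    intro s _
    rw [insertArg_ne ψ k u s.1 (Finset.ne_of_mem_erase s.2)]
  rw [h2]
  show _ * ((Dpow (as k) (ψ fun j => u (shIdx k j))) * _) = _
  unfold plug
  ring

lemma plug_elem {n p q : ℕ} (a₀ : Fin n → ℕ) (as : Fin p → Fin n → ℕ) (k : Fin p)
    (b₀ : Fin n → ℕ) (bs : Fin q → Fin n → ℕ) :
    plug a₀ as k (elem b₀ bs) = elem (a₀ + b₀) (mergeIdx as bs k) := by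
  funext u
  unfold plug elem
  rw [prod_split k (fun w => Dpow (mergeIdx as bs k w) (u w))]
  have e1 : ∏ j : Fin q, Dpow (mergeIdx as bs k (shIdx k j)) (u (shIdx k j))
      = ∏ j : Fin q, Dpow (bs j) (u (shIdx k j)) :=
    Finset.prod_congr rfl (fun j _ => by rw [merge_sh])
  have e2 : ∏ s : {s : Fin p // s ∈ Finset.univ.erase k},
        Dpow (mergeIdx as bs k (reIdx q k s.1 (Finset.ne_of_mem_erase s.2)))
          (u (reIdx q k s.1 (Finset.ne_of_mem_erase s.2)))
      = ∏ s : {s : Fin p // s ∈ Finset.univ.erase k},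
          Dpow (as s.1) (u (reIdx q k s.1 (Finset.ne_of_mem_erase s.2))) :=
    Finset.prod_congr rfl (fun s _ => by rw [merge_re])
  rw [e1, e2, equivFun_symm_add]
  have hm : (MvPolynomial.monomial (Finsupp.equivFunOnFinite.symm a₀)) (1:ℝ)
      * (MvPolynomial.monomial (Finsupp.equivFunOnFinite.symm b₀)) (1:ℝ)
      = (MvPolynomial.monomial (Finsupp.equivFunOnFinite.symm a₀
          + Finsupp.equivFunOnFinite.symm b₀)) (1:ℝ) := by
    rw [MvPolynomial.monomial_mul, one_mul]
  rw [← hm]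
  ring

lemma sum_merge {n p q : ℕ} (as : Fin p → Fin n → ℕ) (bs : Fin q → Fin n → ℕ) (k : Fin p)
    (i : Fin n) :
    ∑ w : Fin (p + q - 1), (mergeIdx as bs k w i : ℤ)
      = (∑ j : Fin q, (bs j i : ℤ)) + ((∑ s : Fin p, (as s i : ℤ)) - (as k i : ℤ)) := by
  classical
  rw [sum_split k (fun w => (mergeIdx as bs k w i : ℤ))]
  congr 1
  · exact Finset.sum_congr rfl (fun j _ => by rw [merge_sh])
  · have h1 : ∑ s : {s : Fin p // s ∈ Finset.univ.erase k},
          ((mergeIdx as bs k (reIdx q k s.1 (Finset.ne_of_mem_erase s.2)) i : ℤ))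
        = ∑ s : {s : Fin p // s ∈ Finset.univ.erase k}, (as s.1 i : ℤ) :=
      Finset.sum_congr rfl (fun s _ => by rw [merge_re])
    rw [h1]
    have h2 : ∑ s : {s : Fin p // s ∈ Finset.univ.erase k}, (as s.1 i : ℤ)
        = ∑ s ∈ Finset.univ.erase k, (as s i : ℤ) := by
      rw [Finset.univ_eq_attach]
      exact Finset.sum_attach (Finset.univ.erase k) (fun s => (as s i : ℤ))
    rw [h2, Finset.sum_erase_eq_sub (Finset.mem_univ k)]

lemma plug_mem {n p q : ℕ} (a₀ : Fin n → ℕ) (as : Fin p → Fin n → ℕ) (k : Fin p)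
    {w s : Fin n → ℤ} {χ : Cochain (MvPolynomial (Fin n) ℝ) q} (h : χ ∈ DSpan n q w s) :
    plug a₀ as k χ ∈ DSpan n (p + q - 1)
      (fun i => wt a₀ as i + (as k i : ℤ) + w i)
      (fun i => swt a₀ as i - (as k i : ℤ) + s i) := by
  classical
  induction h using Submodule.span_induction with
  | mem φ hφ =>
    obtain ⟨b₀, bs, hw, hs, rfl⟩ := hφ
    rw [plug_elem]
    apply Submodule.subset_span
    refine ⟨a₀ + b₀, mergeIdx as bs k, ?_, ?_, rfl⟩
    · funext i
      have hw' := congrFun hw i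
      simp only [wt] at hw' ⊢
      rw [sum_merge]
      simp only [Pi.add_apply]
      push_cast
      linarith
    · intro i
      have hs' := hs i
      simp only [swt] at hs' ⊢
      rw [sum_merge]
      simp only [Pi.add_apply]
      push_cast
      linarith
  | zero =>
    have h0 : plug a₀ as k (0 : Cochain (MvPolynomial (Fin n) ℝ) q) = 0 := by
      funext u; show (0 : MvPolynomial (Fin n) ℝ) * _ = _; rw [zero_mul]; rfl
    rw [h0]; exact zero_mem _
  | add x y hx hy ihx ihy =>
    have h0 : plug a₀ as k (x + y) = plug a₀ as k x + plug a₀ as k y := by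
      funext u; show (x _ + y _) * _ = _; rw [add_mul]; rfl
    rw [h0]; exact add_mem ihx ihy
  | smul c x hx ihx =>
    have h0 : plug a₀ as k (c • x) = c • plug a₀ as k x := by
      funext u; show (c • x _) * _ = _; rw [smul_mul_assoc]; rfl
    rw [h0]; exact Submodule.smul_mem _ _ ihx

lemma circ_mem {n p q : ℕ} {a b a' b' : Fin n → ℤ}
    {φ : Cochain (MvPolynomial (Fin n) ℝ) p} {ψ : Cochain (MvPolynomial (Fin n) ℝ) q}
    (hφ : φ ∈ WS2 n p a b) (hψ : ψ ∈ WS2 n q a' b') :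
    circ φ ψ ∈ DSpan n (p + q - 1) (a + a') (b + b') := by
  classical
  induction hφ using Submodule.span_induction with
  | mem φ₁ hφ₁ =>
    obtain ⟨a₀, as, hw, hs, rfl⟩ := hφ₁
    have hdec : circ (elem a₀ as) ψ
        = ∑ k : Fin p, sgn ((k.val : ℤ) * ((q : ℤ) - 1)) •
            plug a₀ as k (fun v => Dpow (as k) (ψ v)) := by
      funext u
      rw [Finset.sum_apply]
      unfold circ
      apply Finset.sum_congr rfl
      intro k _
      rw [Pi.smul_apply]
      congr 1
      exact congrFun (plug_insert a₀ as k ψ) u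
    rw [hdec]
    apply Submodule.sum_mem
    intro k _
    apply zsmul_mem
    have h1 : (fun v => Dpow (as k) (ψ v)) ∈ DSpan n q
        (fun j => a' j - (as k j : ℤ)) (fun j => b' j + (as k j : ℤ)) :=
      DSpan_Dpow_mem _ (as k) rfl (WS2_le_DSpan n q a' b' hψ)
    have h2 := plug_mem a₀ as k h1
    rw [DSpan_congr (w' := a + a') (s' := b + b')] at h2
    · exact h2
    · funext i
      have h3 := congrFun hw i
      simp only [Pi.add_apply]
      linarith
    · funext i
      have h3 := congrFun hs i
      simp only [Pi.add_apply]
      linarith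
  | zero =>
    have h0 : circ (0 : Cochain (MvPolynomial (Fin n) ℝ) p) ψ = 0 := by
      funext u; unfold circ; simp [Pi.zero_apply]
    rw [h0]; exact zero_mem _
  | add x y hx hy ihx ihy =>
    have h0 : circ (x + y) ψ = circ x ψ + circ y ψ := by
      funext u; unfold circ
      simp only [Pi.add_apply, smul_add, Finset.sum_add_distrib]
    rw [h0]; exact add_mem ihx ihy
  | smul c x hx ihx =>
    have h0 : circ (c • x) ψ = c • circ x ψ := by
      funext u; unfold circ
      simp only [Pi.smul_apply, Finset.smul_sum]
      exact Finset.sum_congr rfl (fun k _ => smul_comm _ _ _)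
    rw [h0]; exact Submodule.smul_mem _ _ ihx

lemma cast_mem {n m m' : ℕ} (h : m = m') {w s : Fin n → ℤ}
    {χ : Cochain (MvPolynomial (Fin n) ℝ) m} (hχ : χ ∈ DSpan n m w s) :
    (fun u : Fin m' → MvPolynomial (Fin n) ℝ => χ (fun i => u (Fin.cast h i)))
      ∈ DSpan n m' w s := by
  induction hχ using Submodule.span_induction with
  | mem φ hφ =>
    obtain ⟨b₀, bs, hw, hs, rfl⟩ := hφ
    apply Submodule.subset_span
    refine ⟨b₀, fun i => bs (Fin.cast h.symm i), ?_, ?_, ?_⟩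
    · rw [← hw]
      funext i
      simp only [wt]
      congr 1
      exact (Equiv.sum_comp (finCongr h) (fun j => (bs (Fin.cast h.symm j) i : ℤ))).symm
    · intro i
      have := hs i
      simp only [swt] at this ⊢
      have he : ∑ j : Fin m', (bs (Fin.cast h.symm j) i : ℤ) = ∑ j : Fin m, (bs j i : ℤ) :=
        Equiv.sum_comp (finCongr h.symm) (fun j => (bs j i : ℤ))
      rw [he]
      exact this
    · funext u
      show elem b₀ bs _ = _
      unfold elem
      congr 1
      exact Equiv.prod_comp (finCongr h)
        (fun j => Dpow (bs (Fin.cast h.symm j)) (u j))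
  | zero =>
    have h0 : (fun u : Fin m' → MvPolynomial (Fin n) ℝ =>
        (0 : Cochain (MvPolynomial (Fin n) ℝ) m) (fun i => u (Fin.cast h i))) = 0 := rfl
    rw [h0]; exact zero_mem _
  | add x y hx hy ihx ihy => exact add_mem ihx ihy
  | smul c x hx ihx => exact Submodule.smul_mem _ _ ihx

theorem WS2_graded' {n p q : ℕ} (a b a' b' : Fin n → ℤ)
    (φ : Cochain (MvPolynomial (Fin n) ℝ) p) (ψ : Cochain (MvPolynomial (Fin n) ℝ) q)
    (hφ : φ ∈ WS2 n p a b) (hψ : ψ ∈ WS2 n q a' b') :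
    cup φ ψ ∈ WS2 n (p + q) (a + a') (b + b') ∧
      bracket φ ψ ∈ Sfil n (p + q - 1) (a + a', b + b') := by
  refine ⟨cup_mem hφ hψ, ?_⟩
  have h1 : circ φ ψ ∈ Sfil n (p + q - 1) (a + a', b + b') :=
    DSpan_le_Sfil n (p + q - 1) (a + a') (b + b') (circ_mem hφ hψ)
  have h2 : circ ψ φ ∈ DSpan n (q + p - 1) (a' + a) (b' + b) := circ_mem hψ hφ
  have h3 := cast_mem (show q + p - 1 = p + q - 1 by omega) h2
  rw [add_comm a' a, add_comm b' b] at h3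
  have h4 : (fun u : Fin (p + q - 1) → MvPolynomial (Fin n) ℝ =>
      circ ψ φ (fun i => u (Fin.cast (by omega : q + p - 1 = p + q - 1) i)))
      ∈ Sfil n (p + q - 1) (a + a', b + b') :=
    DSpan_le_Sfil n (p + q - 1) (a + a') (b + b') h3
  exact sub_mem h1 (zsmul_mem h4 _)

/-- bigraded components multiply: `C_{ab} ⌣ C_{a'b'} ⊆ C_{a+a',b+b'}`
and `[C_{ab}, C_{a'b'}] ⊆ ⊕_{a+a' ≤ d ≤ b+b'} C_{a+a',d} = S_{(a,b)+(a',b')}`. -/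
theorem WS2_graded {n p q : ℕ} (a b a' b' : Fin n → ℤ)
    (φ : Cochain (MvPolynomial (Fin n) ℝ) p) (ψ : Cochain (MvPolynomial (Fin n) ℝ) q)
    (hφ : φ ∈ WS2 n p a b) (hψ : ψ ∈ WS2 n q a' b') :
    cup φ ψ ∈ WS2 n (p + q) (a + a') (b + b') ∧
      bracket φ ψ ∈ Sfil n (p + q - 1) (a + a', b + b') := by
  exact WS2_graded' a b a' b' φ ψ hφ hψ


end Gerst
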